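/- For the quantum matrix A_q of GL_q(2), the noncommutative characteristic polynomial for the second row is Φ₂(λ) = λ² - (q a_{11} + a_{22})λ + q a_{11}a_{22} - a_{12}a_{21}, i.e. A_q² - (q a_{11}+a_{22})A_q + (q a_{11}a_{22} - a_{12}a_{21})I has zero second row. -/
import Mathlib


/-- The noncommutative characteristic polynomial of the quantum matrix `A_q`
for the second row: `A_q² - (q a₁₁ + a₂₂)A_q + (q a₁₁a₂₂ - a₁₂a₂₁)I`
has zero second row. -/
theorem quantum_char_poly_second_row (R : Type*) [Ring R] (q a11 a12 a21 a22 : R)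
    [Invertible q]
    (hqc : ∀ x : R, q * x = x * q)
    (h1 : a11 * a12 = ⅟q * (a12 * a11))
    (h2 : a11 * a21 = ⅟q * (a21 * a11))
    (h3 : a12 * a22 = ⅟q * (a22 * a12))
    (h4 : a21 * a22 = ⅟q * (a22 * a21))
    (h5 : a12 * a21 = a21 * a12)
    (h6 : a11 * a22 - a22 * a11 = (⅟q - q) * (a12 * a21)) :
    ∀ j : Fin 2,
      ((!![a11, a12; a21, a22] : Matrix (Fin 2) (Fin 2) R) ^ 2
        - (q * a11 + a22) • !![a11, a12; a21, a22]
        + (q * (a11 * a22) - a12 * a21) • (1 : Matrix (Fin 2) (Fin 2) R))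
        1 j = 0 := by
  have key : q * (a11 * a21) = a21 * a11 := by
    rw [h2, ← mul_assoc, mul_invOf_self, one_mul]
  intro j
  fin_cases j <;>
    simp [pow_two, Matrix.mul_apply, Fin.sum_univ_two, Matrix.smul_apply,
      Matrix.one_apply, smul_eq_mul, mul_add, add_mul, mul_sub, sub_mul, ← key, h5] <;> noncomm_ring
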